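/- Let R, V, s be real numbers with R > 0, V > 0, s > 0, define γ_min = 2s + 2(s(1+s)V/R² + √(s(1+s)(1+sV/R²)(1+(1+s)V/R²))), D(γ) = (γ+2)²R² − 4(γ+1)(1+s)(R²+sV), and X_±(γ) = ((γ+2)R ± √(D(γ)))/(2(1+s)). Then for every γ > γ_min, the function γ ↦ X_+(γ)/X_−(γ) is differentiable at γ with derivative (γ/(γ+1))·(R/√(D(γ)))·(X_+(γ)/X_−(γ)). -/

import Mathlib

set_option maxHeartbeats 1600000 in
/-- For `R > 0`, `V > 0`, `s > 0`, with
`D(γ) = (γ+2)²R² − 4(γ+1)(1+s)(R²+sV)` and `X_±(γ) = ((γ+2)R ± √(D(γ)))/(2(1+s))`,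
at every `γ > γ_min` the ratio `X_+/X_−` is differentiable with derivative
`(γ/(γ+1))·(R/√(D(γ)))·(X_+(γ)/X_−(γ))`. -/
theorem deriv_ratio_Xplus_Xminus (R V s γmin : ℝ)
    (hR : 0 < R) (hV : 0 < V) (hs : 0 < s)
    (hγmin : γmin = 2 * s + 2 * (s * (1 + s) * V / R ^ 2 +
      Real.sqrt (s * (1 + s) * (1 + s * V / R ^ 2) * (1 + (1 + s) * V / R ^ 2))))
    (D Xp Xm : ℝ → ℝ)
    (hD : ∀ γ, D γ = (γ + 2) ^ 2 * R ^ 2 - 4 * (γ + 1) * (1 + s) * (R ^ 2 + s * V))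
    (hXp : ∀ γ, Xp γ = ((γ + 2) * R + Real.sqrt (D γ)) / (2 * (1 + s)))
    (hXm : ∀ γ, Xm γ = ((γ + 2) * R - Real.sqrt (D γ)) / (2 * (1 + s))) :
    ∀ γ > γmin,
      HasDerivAt (fun g => Xp g / Xm g)
        ((γ / (γ + 1)) * (R / Real.sqrt (D γ)) * (Xp γ / Xm γ)) γ := by
  intro γ hγ
  have hR2 : (0:ℝ) < R ^ 2 := by positivity
  set t := Real.sqrt (s * (1 + s) * (1 + s * V / R ^ 2) * (1 + (1 + s) * V / R ^ 2)) with ht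
  have ht0 : 0 ≤ t := Real.sqrt_nonneg _
  have ht2 : t ^ 2 = s * (1 + s) * (1 + s * V / R ^ 2) * (1 + (1 + s) * V / R ^ 2) :=
    Real.sq_sqrt (by positivity)
  have hγ' : 2 * s + 2 * (s * (1 + s) * V / R ^ 2 + t) < γ := by rw [hγmin] at hγ; exact hγ
  have hγ0 : 0 < γ := by
    have h1 : 0 < s * (1 + s) * V / R ^ 2 := by positivity
    linarith
  have hγ1 : 0 < γ + 1 := by linarith
  -- D γ > 0
  have hw : t ^ 2 * R ^ 2 * R ^ 2 = s * (1 + s) * (R ^ 2 + s * V) * (R ^ 2 + (1 + s) * V) := by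
    rw [ht2]; field_simp
  have hx : 2 * s * (R ^ 2 + (1 + s) * V) + 2 * (t * R ^ 2) < γ * R ^ 2 := by
    have := mul_lt_mul_of_pos_right hγ' hR2
    have heq : (2 * s + 2 * (s * (1 + s) * V / R ^ 2 + t)) * R ^ 2
        = 2 * s * (R ^ 2 + (1 + s) * V) + 2 * (t * R ^ 2) := by field_simp; ring
    linarith [heq ▸ this]
  have hDpos : 0 < D γ := by
    rw [hD]
    have htR : 0 ≤ t * R ^ 2 := by positivity
    nlinarith [hw, hx, htR, hR2, sq_nonneg (γ * R ^ 2 - 2 * s * (R ^ 2 + (1 + s) * V) - 2 * (t * R ^ 2)),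
      mul_pos hs (mul_pos hR2 hR2)]
  have hb0 : 0 < Real.sqrt (D γ) := Real.sqrt_pos.mpr hDpos
  have hkey : Real.sqrt (D γ) ^ 2 = (γ + 2) ^ 2 * R ^ 2 - 4 * (γ + 1) * (1 + s) * (R ^ 2 + s * V) := by
    rw [Real.sq_sqrt hDpos.le, hD]
  have ha0 : 0 < (γ + 2) * R := by positivity
  have hba : Real.sqrt (D γ) < (γ + 2) * R := by
    rw [show (γ + 2) * R = Real.sqrt (((γ + 2) * R) ^ 2) from
      (Real.sqrt_sq ha0.le).symm]
    apply Real.sqrt_lt_sqrt hDpos.le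
    rw [hD]
    nlinarith [mul_pos (mul_pos hγ1 (by linarith : (0:ℝ) < 1 + s)) (by nlinarith : (0:ℝ) < R ^ 2 + s * V)]
  have hs1 : (0:ℝ) < 1 + s := by linarith
  have hXm_pos : 0 < Xm γ := by
    rw [hXm]; apply div_pos (by linarith) (by linarith)
  have hXm_ne : Xm γ ≠ 0 := hXm_pos.ne'
  -- derivative of D
  set D' : ℝ := 2 * (γ + 2) * R ^ 2 - 4 * (1 + s) * (R ^ 2 + s * V) with hD'
  have hid : HasDerivAt (fun g : ℝ => g) 1 γ := hasDerivAt_id γ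
  have hDfun : D = fun g => (g + 2) ^ 2 * R ^ 2 - 4 * (g + 1) * (1 + s) * (R ^ 2 + s * V) :=
    funext hD
  have hDexp : HasDerivAt D D' γ := by
    rw [hDfun]
    have hA := ((hid.add_const 2).pow 2).mul_const (R ^ 2)
    have hB := (((hid.add_const 1).const_mul 4).mul_const (1 + s)).mul_const (R ^ 2 + s * V)
    convert hA.sub hB using 1
    case e'_4 => rfl
    case e'_5 => rfl
    case e'_8 => rfl
    simp [hD']
  have hsqrt : HasDerivAt (fun g => Real.sqrt (D g)) (D' / (2 * Real.sqrt (D γ))) γ :=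
    hDexp.sqrt hDpos.ne'
  have hXpfun : Xp = fun g => ((g + 2) * R + Real.sqrt (D g)) / (2 * (1 + s)) := funext hXp
  have hXmfun : Xm = fun g => ((g + 2) * R - Real.sqrt (D g)) / (2 * (1 + s)) := funext hXm
  have hXpD : HasDerivAt Xp ((R + D' / (2 * Real.sqrt (D γ))) / (2 * (1 + s))) γ := by
    rw [hXpfun]
    have := (((hid.add_const 2).mul_const R).add hsqrt).div_const (2 * (1 + s))
    convert this using 1
    case e'_4 => rfl
    case e'_5 => rfl
    case e'_8 => rfl
    ring
  have hXmD : HasDerivAt Xm ((R - D' / (2 * Real.sqrt (D γ))) / (2 * (1 + s))) γ := by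
    rw [hXmfun]
    have := (((hid.add_const 2).mul_const R).sub hsqrt).div_const (2 * (1 + s))
    convert this using 1
    case e'_4 => rfl
    case e'_5 => rfl
    case e'_8 => rfl
    ring
  have hdiv := hXpD.div hXmD hXm_ne
  convert hdiv using 1
  case e'_4 => rfl
  case e'_5 => rfl
  case e'_8 => rfl
  -- value equality
  set b := Real.sqrt (D γ) with hb
  have hbne : b ≠ 0 := hb0.ne'
  have hsne : (1 + s) ≠ 0 := hs1.ne'
  have hnum : (R + D' / (2 * b)) / (2 * (1 + s)) * Xm γ
      - Xp γ * ((R - D' / (2 * b)) / (2 * (1 + s)))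
      = γ * (R ^ 2 + s * V) * R / ((1 + s) * b) := by
    have h1 : (R + D' / (2 * b)) / (2 * (1 + s)) * Xm γ
        - Xp γ * ((R - D' / (2 * b)) / (2 * (1 + s)))
        = (2 * ((γ + 2) * R) * D' - 4 * b ^ 2 * R) / (2 * b * (2 * (1 + s)) ^ 2) := by
      rw [hXp, hXm, ← hb]
      field_simp
      ring
    rw [h1, hkey, hD']
    field_simp
    ring
  have hprod : Xp γ * Xm γ = (γ + 1) * (R ^ 2 + s * V) / (1 + s) := by
    have h1 : Xp γ * Xm γ = (((γ + 2) * R) ^ 2 - b ^ 2) / ((2 * (1 + s)) ^ 2) := by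
      rw [hXp, hXm, ← hb]
      field_simp
      ring
    rw [h1, hkey]
    field_simp
    ring
  rw [hnum]
  have hXpval : Xp γ = ((γ + 1) * (R ^ 2 + s * V) / (1 + s)) / Xm γ := by
    rw [eq_div_iff hXm_ne]; exact hprod
  rw [hXpval]
  field_simp
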